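/- For every real number θ0 with 0 ≤ θ0 < π, the integral ∫_{θ0}^{π} ( sin(θ/2) / √(cos θ0 − cos θ) ) dθ equals π/√2. -/

import Mathlib

open Real intervalIntegral

set_option maxHeartbeats 1000000

theorem tautochrone_key_integral (θ0 : ℝ) (h0 : 0 ≤ θ0) (h1 : θ0 < Real.pi) :
    ∫ θ in θ0..Real.pi,
      Real.sin (θ / 2) / Real.sqrt (Real.cos θ0 - Real.cos θ)
      = Real.pi / Real.sqrt 2 := by
  have hπ := Real.pi_pos
  set c : ℝ := Real.cos (θ0 / 2) with hc_def
  have hc : 0 < c := Real.cos_pos_of_mem_Ioo ⟨by linarith, by linarith⟩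
  set f : ℝ → ℝ := fun θ => Real.sin (θ / 2) / Real.sqrt (Real.cos θ0 - Real.cos θ) with hf_def
  set F : ℝ → ℝ := fun θ => -(Real.sqrt 2 * Real.arcsin (Real.cos (θ / 2) / c)) with hF_def
  set C : ℝ := Real.sqrt (Real.pi / (2 * c)) with hC_def
  have hC0 : 0 ≤ C := Real.sqrt_nonneg _
  -- integrability
  have hint : IntervalIntegrable f MeasureTheory.volume θ0 Real.pi := by
    have hg : IntervalIntegrable (fun x => C * (x - θ0) ^ (-(1/2) : ℝ))
        MeasureTheory.volume θ0 Real.pi := by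
      have h := (intervalIntegral.intervalIntegrable_rpow'
        (a := 0) (b := Real.pi - θ0) (r := -(1/2)) (by norm_num)).comp_sub_right θ0
      simpa using h.const_mul C
    apply hg.mono_fun
    · apply Measurable.aestronglyMeasurable
      apply Measurable.div
      · exact (Real.continuous_sin.comp (continuous_id.div_const 2)).measurable
      · exact (Real.continuous_sqrt.comp (continuous_const.sub Real.continuous_cos)).measurable
    · filter_upwards [MeasureTheory.ae_restrict_mem measurableSet_uIoc] with x hx
      rw [Set.uIoc_of_le h1.le] at hx
      obtain ⟨hxl, hxr⟩ := hx
      have hxt : 0 < x - θ0 := by linarith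
      set s : ℝ := Real.sin (x / 2) with hs_def
      have hs0 : 0 ≤ s := Real.sin_nonneg_of_nonneg_of_le_pi (by linarith) (by linarith)
      have hs1 : s ≤ 1 := Real.sin_le_one _
      have hDpos : 0 < Real.cos θ0 - Real.cos x := by
        have := Real.cos_lt_cos_of_nonneg_of_le_pi h0 hxr hxl
        linarith
      set D : ℝ := Real.cos θ0 - Real.cos x with hD_def
      have hD : D = 2 * Real.sin ((x + θ0) / 2) * Real.sin ((x - θ0) / 2) := by
        rw [hD_def, Real.cos_sub_cos, show (θ0 + x) / 2 = (x + θ0) / 2 by ring,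
          show (θ0 - x) / 2 = -((x - θ0) / 2) by ring, Real.sin_neg]
        ring
      have hA : s * c ≤ Real.sin ((x + θ0) / 2) := by
        rw [show (x + θ0) / 2 = x / 2 + θ0 / 2 by ring, Real.sin_add]
        have h₁ : 0 ≤ Real.cos (x / 2) :=
          Real.cos_nonneg_of_mem_Icc ⟨by linarith, by linarith⟩
        have h₂ : 0 ≤ Real.sin (θ0 / 2) :=
          Real.sin_nonneg_of_nonneg_of_le_pi (by linarith) (by linarith)
        nlinarith [mul_nonneg h₁ h₂]
      have hA' : 0 ≤ Real.sin ((x + θ0) / 2) :=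
        le_trans (by positivity) hA
      have hB' : x - θ0 ≤ Real.pi * Real.sin ((x - θ0) / 2) := by
        have h := Real.mul_le_sin (x := (x - θ0) / 2) (by linarith) (by linarith)
        have h2 : (x - θ0) / Real.pi ≤ Real.sin ((x - θ0) / 2) := by
          calc (x - θ0) / Real.pi = 2 / Real.pi * ((x - θ0) / 2) := by ring
          _ ≤ _ := h
        linarith [(div_le_iff₀ hπ).mp h2]
      have hD'' : 2 * c * s * (x - θ0) ≤ Real.pi * D := by
        rw [hD]
        nlinarith [mul_le_mul hA hB' (by linarith) hA']
      have key : s ^ 2 * (x - θ0) ≤ Real.pi / (2 * c) * D := by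
        rw [div_mul_eq_mul_div, le_div_iff₀ (by positivity)]
        nlinarith [mul_nonneg (mul_nonneg hs0 hxt.le) hc.le]
      -- now the norm inequality
      have hfx : f x = s / Real.sqrt D := rfl
      have hgx : 0 ≤ (x - θ0) ^ (-(1/2) : ℝ) := Real.rpow_nonneg hxt.le _
      rw [Real.norm_eq_abs, Real.norm_eq_abs, abs_of_nonneg (by positivity),
        abs_of_nonneg (by positivity)]
      rw [hfx, Real.rpow_neg hxt.le, ← Real.sqrt_eq_rpow]
      have hsqD : 0 < Real.sqrt D := Real.sqrt_pos.mpr hDpos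
      have hsqx : 0 < Real.sqrt (x - θ0) := Real.sqrt_pos.mpr hxt
      rw [show C * (Real.sqrt (x - θ0))⁻¹ = C / Real.sqrt (x - θ0) by ring,
        div_le_div_iff₀ hsqD hsqx]
      have lhs_eq : s * Real.sqrt (x - θ0) = Real.sqrt (s ^ 2 * (x - θ0)) := by
        rw [Real.sqrt_mul (sq_nonneg s), Real.sqrt_sq hs0]
      have rhs_eq : C * Real.sqrt D = Real.sqrt (Real.pi / (2 * c) * D) := by
        rw [hC_def, ← Real.sqrt_mul (by positivity)]
      rw [lhs_eq, rhs_eq]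
      exact Real.sqrt_le_sqrt key
  -- derivative
  have hderiv : ∀ x ∈ Set.Ioo θ0 Real.pi, HasDerivAt F (f x) x := by
    intro x hx
    obtain ⟨hxl, hxr⟩ := hx
    have hv : Real.cos (x / 2) < c :=
      Real.cos_lt_cos_of_nonneg_of_le_pi (by linarith) (by linarith) (by linarith)
    have hv0 : 0 ≤ Real.cos (x / 2) :=
      Real.cos_nonneg_of_mem_Icc ⟨by linarith, by linarith⟩
    set v : ℝ := Real.cos (x / 2) with hv_def
    have hu1 : v / c < 1 := (div_lt_one hc).mpr hv
    have hu0 : 0 ≤ v / c := by positivity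
    have hE : 0 < c ^ 2 - v ^ 2 := by nlinarith
    -- derivative of inner function
    have h1 : HasDerivAt (fun y : ℝ => y / 2) (1 / 2) x := (hasDerivAt_id x).div_const 2
    have h2 : HasDerivAt (fun y : ℝ => Real.cos (y / 2)) (-Real.sin (x / 2) * (1 / 2)) x :=
      by have := (Real.hasDerivAt_cos (x / 2)).comp x h1; exact this
    have h3 : HasDerivAt (fun y : ℝ => Real.cos (y / 2) / c)
        (-Real.sin (x / 2) * (1 / 2) / c) x := h2.div_const c
    have h4 := (Real.hasDerivAt_arcsin (by linarith) (by linarith : v / c ≠ 1)).comp x h3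
    have h5 := (h4.const_mul (Real.sqrt 2)).neg
    convert h5 using 1
    · rfl
    · rfl
    · rfl
    -- value identity
    have hDco : Real.cos θ0 - Real.cos x = 2 * (c ^ 2 - v ^ 2) := by
      have e1 := Real.cos_sq (θ0 / 2)
      have e2 := Real.cos_sq (x / 2)
      rw [show 2 * (θ0 / 2) = θ0 by ring] at e1
      rw [show 2 * (x / 2) = x by ring] at e2
      rw [hc_def, hv_def]
      nlinarith [e1, e2]
    have h1u : 1 - (v / c) ^ 2 = (c ^ 2 - v ^ 2) / c ^ 2 := by
      field_simp
    have hsq : Real.sqrt (1 - (v / c) ^ 2) = Real.sqrt (c ^ 2 - v ^ 2) / c := by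
      rw [h1u, Real.sqrt_div hE.le, Real.sqrt_sq hc.le]
    have hsqE : 0 < Real.sqrt (c ^ 2 - v ^ 2) := Real.sqrt_pos.mpr hE
    have h2sq : Real.sqrt 2 * Real.sqrt 2 = 2 := Real.mul_self_sqrt (by norm_num)
    have hsplit : Real.sqrt (Real.cos θ0 - Real.cos x)
        = Real.sqrt 2 * Real.sqrt (c ^ 2 - v ^ 2) := by
      rw [hDco, Real.sqrt_mul (by norm_num)]
    show f x = _
    rw [hf_def]
    simp only
    rw [hsplit, hsq]
    have h2sq' : Real.sqrt 2 ^ 2 = 2 := Real.sq_sqrt (by norm_num)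
    field_simp
    ring_nf
    rw [h2sq']
  have hcont : ContinuousOn F (Set.Icc θ0 Real.pi) := by
    apply Continuous.continuousOn
    apply Continuous.neg
    apply Continuous.mul continuous_const
    exact Real.continuous_arcsin.comp ((Real.continuous_cos.comp (continuous_id.div_const 2)).div_const c)
  have hmain := intervalIntegral.integral_eq_sub_of_hasDeriv_right_of_le h1.le hcont
    (fun x hx => (hderiv x hx).hasDerivWithinAt) hint
  rw [hmain]
  have hFpi : F Real.pi = 0 := by
    rw [hF_def]
    simp only
    rw [Real.cos_pi_div_two, zero_div, Real.arcsin_zero, mul_zero, neg_zero]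
  have hFθ0 : F θ0 = -(Real.sqrt 2 * (Real.pi / 2)) := by
    rw [hF_def]
    simp only
    rw [← hc_def, div_self hc.ne', Real.arcsin_one]
  rw [hFpi, hFθ0]
  have h2sq : Real.sqrt 2 * Real.sqrt 2 = 2 := Real.mul_self_sqrt (by norm_num)
  have h2pos : (0:ℝ) < Real.sqrt 2 := Real.sqrt_pos.mpr (by norm_num)
  rw [eq_div_iff h2pos.ne']
  nlinarith [h2sq]
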